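/- Let b and d be integers with −2d < b < 2d, let τ ∈ ℂ with Im τ > 0, and let u, v ∈ ℂ. Then: (i) A_{d,b}(u,v|4τ) − C_{d,b}(u,v|4τ) = θ₄(u|(2d+b)τ)·θ₄(v|(2d−b)τ); and (ii) A_{d,b}(u,v|τ)² − C_{d,b}(u,v|τ)² = A_{d,b}(u,v+π/2|τ)² − C_{d,b}(u,v+π/2|τ)². -/
import Mathlib


open Complex

/-- The Jacobi theta function θ₄(z|τ). -/
noncomputable def theta4 (z τ : ℂ) : ℂ :=
  ∑' n : ℤ, (-1 : ℂ) ^ n * Complex.exp (Real.pi * Complex.I * τ * (n : ℂ) ^ 2) *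
    Complex.exp (2 * (n : ℂ) * Complex.I * z)

/-- The theta series `A_{d,b}(u,v|τ)`. -/
noncomputable def Adb (d b : ℤ) (u v τ : ℂ) : ℂ :=
  ∑' m : ℤ, ∑' n : ℤ,
    Complex.exp (Real.pi * Complex.I * τ *
      ((d : ℂ) * (m : ℂ) ^ 2 + (b : ℂ) * (m : ℂ) * (n : ℂ) + (d : ℂ) * (n : ℂ) ^ 2)) *
    Complex.exp (2 * Complex.I * u * ((m : ℂ) + (n : ℂ))) *
    Complex.exp (2 * Complex.I * v * ((m : ℂ) - (n : ℂ)))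

/-- The theta series `C_{d,b}(u,v|τ)`. -/
noncomputable def Cdb (d b : ℤ) (u v τ : ℂ) : ℂ :=
  ∑' m : ℤ, ∑' n : ℤ,
    Complex.exp (Real.pi * Complex.I * τ *
      ((d : ℂ) * (m : ℂ) ^ 2 + (b : ℂ) * (m : ℂ) * (n : ℂ) + (d : ℂ) * (n : ℂ) ^ 2
        + ((d : ℂ) + (b : ℂ) / 2) * (m : ℂ) + ((d : ℂ) + (b : ℂ) / 2) * (n : ℂ)
        + (d : ℂ) / 2 + (b : ℂ) / 4)) *
    Complex.exp (2 * Complex.I * u * ((m : ℂ) + (n : ℂ) + 1)) *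
    Complex.exp (2 * Complex.I * v * ((m : ℂ) - (n : ℂ)))

/-! ### Auxiliary material -/

/-- The change of variables `(m, n) ↦ (m + n, m - n)` (resp. `(m + n + 1, m - n)`),
jointly a bijection `Bool × ℤ × ℤ ≃ ℤ × ℤ` according to the parity of `s + t`. -/
def pairFun : Bool × ℤ × ℤ → ℤ × ℤ := fun x =>
  if x.1 then (x.2.1 + x.2.2 + 1, x.2.1 - x.2.2) else (x.2.1 + x.2.2, x.2.1 - x.2.2)

lemma pairFun_false (p : ℤ × ℤ) : pairFun (false, p) = (p.1 + p.2, p.1 - p.2) := rfl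
lemma pairFun_true (p : ℤ × ℤ) : pairFun (true, p) = (p.1 + p.2 + 1, p.1 - p.2) := rfl

lemma pairFun_bij : Function.Bijective pairFun := by
  constructor
  · rintro ⟨b1, m1, n1⟩ ⟨b2, m2, n2⟩ h
    cases b1 <;> cases b2 <;>
      simp only [pairFun, if_true, if_false, Bool.false_eq_true, Bool.true_eq_false,
        Prod.mk.injEq] at h ⊢ <;>
      exact ⟨by first | trivial | omega, by omega, by omega⟩
  · rintro ⟨s, t⟩
    rcases Int.even_or_odd (s + t) with ⟨k, hk⟩ | ⟨k, hk⟩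
    · exact ⟨(false, ((s+t)/2, (s-t)/2)), by
        simp only [pairFun, if_false, Bool.false_eq_true, Prod.mk.injEq]
        constructor <;> omega⟩
    · exact ⟨(true, ((s+t-1)/2, (s-t-1)/2)), by
        simp only [pairFun, if_true, Prod.mk.injEq]
        constructor <;> omega⟩

lemma exp_shift (a c : ℂ) (k : ℤ) (h : a = c + k * (2 * Real.pi * I)) :
    Complex.exp a = Complex.exp c := by
  rw [h, Complex.exp_add, Complex.exp_int_mul_two_pi_mul_I, mul_one]

lemma exp_shift_neg (a c : ℂ) (k : ℤ) (h : a = c + Real.pi * I + k * (2 * Real.pi * I)) :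
    Complex.exp a = -Complex.exp c := by
  rw [h, Complex.exp_add, Complex.exp_int_mul_two_pi_mul_I, mul_one, Complex.exp_add,
    Complex.exp_pi_mul_I, mul_neg_one]

/-- The Jacobi theta function θ₃(z|σ). -/
noncomputable def T3 (z σ : ℂ) : ℂ :=
  ∑' n : ℤ, Complex.exp (Real.pi * Complex.I * σ * (n : ℂ) ^ 2) *
    Complex.exp (2 * (n : ℂ) * Complex.I * z)

lemma summable_T3term (z σ : ℂ) (h : 0 < σ.im) :
    Summable (fun n : ℤ => Complex.exp (Real.pi * Complex.I * σ * (n : ℂ) ^ 2) *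
      Complex.exp (2 * (n : ℂ) * Complex.I * z)) := by
  have h0 := (summable_jacobiTheta₂_term_iff (z / Real.pi) σ).mpr h
  refine h0.congr fun n => ?_
  rw [jacobiTheta₂_term, ← Complex.exp_add]
  congr 1
  have hpi : (Real.pi : ℂ) ≠ 0 := by exact_mod_cast Real.pi_ne_zero
  field_simp
  ring

lemma theta4_eq_T3 (z σ : ℂ) : theta4 z σ = T3 (z + (Real.pi : ℂ) / 2) σ := by
  unfold theta4 T3
  refine tsum_congr fun n => ?_
  have : Complex.exp (2 * (n : ℂ) * I * (z + (Real.pi : ℂ) / 2))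
      = Complex.exp (2 * (n : ℂ) * I * z) * (-1 : ℂ) ^ n := by
    rw [show 2 * (n : ℂ) * I * (z + (Real.pi : ℂ) / 2)
        = 2 * (n : ℂ) * I * z + (n : ℂ) * ((Real.pi : ℂ) * I) by ring,
      Complex.exp_add, Complex.exp_int_mul, Complex.exp_pi_mul_I]
  rw [this]; ring

lemma Adb_shift_u (d b : ℤ) (u v τ : ℂ) :
    Adb d b (u + (Real.pi : ℂ) / 2) v τ = Adb d b u (v + (Real.pi : ℂ) / 2) τ := by
  unfold Adb
  refine tsum_congr fun m => tsum_congr fun n => ?_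
  simp only [← Complex.exp_add]
  exact exp_shift _ _ n (by push_cast; ring)

lemma Cdb_shift_u (d b : ℤ) (u v τ : ℂ) :
    Cdb d b (u + (Real.pi : ℂ) / 2) v τ = -Cdb d b u (v + (Real.pi : ℂ) / 2) τ := by
  unfold Cdb
  rw [← tsum_neg]
  refine tsum_congr fun m => ?_
  rw [← tsum_neg]
  refine tsum_congr fun n => ?_
  simp only [← Complex.exp_add]
  exact exp_shift_neg _ _ n (by push_cast; ring)

lemma Adb_shift_pi (d b : ℤ) (u v τ : ℂ) :
    Adb d b u (v + (Real.pi : ℂ)) τ = Adb d b u v τ := by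
  unfold Adb
  refine tsum_congr fun m => tsum_congr fun n => ?_
  simp only [← Complex.exp_add]
  exact exp_shift _ _ (m - n) (by push_cast; ring)

lemma Cdb_shift_pi (d b : ℤ) (u v τ : ℂ) :
    Cdb d b u (v + (Real.pi : ℂ)) τ = Cdb d b u v τ := by
  unfold Cdb
  refine tsum_congr fun m => tsum_congr fun n => ?_
  simp only [← Complex.exp_add]
  exact exp_shift _ _ (m - n) (by push_cast; ring)

set_option maxHeartbeats 1000000 in
/-- Master identity: `A + C` at `4τ` factors as a product of two θ₃'s. -/
lemma master (d b : ℤ) (h1 : 0 < 2 * d + b) (h2 : 0 < 2 * d - b)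
    (τ : ℂ) (hτ : 0 < τ.im) (u v : ℂ) :
    Adb d b u v (4 * τ) + Cdb d b u v (4 * τ)
      = T3 u (((2 * d + b : ℤ) : ℂ) * τ) * T3 v (((2 * d - b : ℤ) : ℂ) * τ) := by
  set τ₁ : ℂ := ((2 * d + b : ℤ) : ℂ) * τ with hτ₁def
  set τ₂ : ℂ := ((2 * d - b : ℤ) : ℂ) * τ with hτ₂def
  have hτ₁ : 0 < τ₁.im := by
    rw [hτ₁def, Complex.mul_im]
    simp only [Complex.intCast_re, Complex.intCast_im, zero_mul, add_zero]
    have : (0 : ℝ) < ((2 * d + b : ℤ) : ℝ) := by exact_mod_cast h1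
    positivity
  have hτ₂ : 0 < τ₂.im := by
    rw [hτ₂def, Complex.mul_im]
    simp only [Complex.intCast_re, Complex.intCast_im, zero_mul, add_zero]
    have : (0 : ℝ) < ((2 * d - b : ℤ) : ℝ) := by exact_mod_cast h2
    positivity
  set F : ℤ → ℂ := fun n => Complex.exp (Real.pi * Complex.I * τ₁ * (n : ℂ) ^ 2) *
    Complex.exp (2 * (n : ℂ) * Complex.I * u) with hF
  set G : ℤ → ℂ := fun n => Complex.exp (Real.pi * Complex.I * τ₂ * (n : ℂ) ^ 2) *
    Complex.exp (2 * (n : ℂ) * Complex.I * v) with hG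
  set f : ℤ × ℤ → ℂ := fun p => F p.1 * G p.2 with hf
  have hFs : Summable F := summable_T3term u τ₁ hτ₁
  have hGs : Summable G := summable_T3term v τ₂ hτ₂
  have hfs : Summable f :=
    summable_mul_of_summable_norm (summable_norm_iff.mpr hFs) (summable_norm_iff.mpr hGs)
  have hprod : ∑' p, f p = T3 u τ₁ * T3 v τ₂ := by
    rw [Summable.tsum_prod' hfs (fun m => hfs.prod_factor m)]
    simp only [hf]
    calc ∑' (m : ℤ), ∑' (n : ℤ), F m * G n
        = ∑' (m : ℤ), F m * ∑' (n : ℤ), G n := by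
          exact tsum_congr fun m => tsum_mul_left
      _ = (∑' (m : ℤ), F m) * ∑' (n : ℤ), G n := tsum_mul_right
      _ = T3 u τ₁ * T3 v τ₂ := rfl
  set e : Bool × ℤ × ℤ ≃ ℤ × ℤ := Equiv.ofBijective pairFun pairFun_bij with he
  have hcomp : Summable (fun x : Bool × ℤ × ℤ => f (e x)) := (e.summable_iff).mpr hfs
  have hsplit : ∑' p, f p
      = (∑' p : ℤ × ℤ, f (pairFun (false, p))) + (∑' p : ℤ × ℤ, f (pairFun (true, p))) := by
    rw [← e.tsum_eq f]
    rw [Summable.tsum_prod' hcomp (fun bb => hcomp.prod_factor bb), tsum_bool]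
    rfl
  have hsA : Summable (fun p : ℤ × ℤ => f (pairFun (false, p))) :=
    hcomp.comp_injective (fun p q h => by simpa using congrArg Prod.snd h)
  have hsC : Summable (fun p : ℤ × ℤ => f (pairFun (true, p))) :=
    hcomp.comp_injective (fun p q h => by simpa using congrArg Prod.snd h)
  have hA : Adb d b u v (4 * τ) = ∑' p : ℤ × ℤ, f (pairFun (false, p)) := by
    rw [Summable.tsum_prod' hsA (fun m => hsA.prod_factor m), Adb]
    refine tsum_congr fun m => tsum_congr fun n => ?_
    rw [pairFun_false, hf, hF, hG, hτ₁def, hτ₂def]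
    simp only [← Complex.exp_add]
    congr 1
    push_cast
    ring
  have hC : Cdb d b u v (4 * τ) = ∑' p : ℤ × ℤ, f (pairFun (true, p)) := by
    rw [Summable.tsum_prod' hsC (fun m => hsC.prod_factor m), Cdb]
    refine tsum_congr fun m => tsum_congr fun n => ?_
    rw [pairFun_true, hf, hF, hG, hτ₁def, hτ₂def]
    simp only [← Complex.exp_add]
    congr 1
    push_cast
    ring
  rw [hA, hC, ← hsplit, hprod]

/-- Theorem on `A_{d,b}` and `C_{d,b}`: the difference factors as a product of two θ₄'s,
and the difference of squares is invariant under `v ↦ v + π/2`. -/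
theorem Adb_Cdb_identities (d b : ℤ) (hb1 : -(2 * d) < b) (hb2 : b < 2 * d)
    (τ : ℂ) (hτ : 0 < τ.im) (u v : ℂ) :
    (Adb d b u v (4 * τ) - Cdb d b u v (4 * τ)
        = theta4 u (((2 * d + b : ℤ) : ℂ) * τ) * theta4 v (((2 * d - b : ℤ) : ℂ) * τ))
    ∧ (Adb d b u v τ ^ 2 - Cdb d b u v τ ^ 2
        = Adb d b u (v + (Real.pi : ℂ) / 2) τ ^ 2 - Cdb d b u (v + (Real.pi : ℂ) / 2) τ ^ 2) := by
  have h1 : 0 < 2 * d + b := by omega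
  have h2 : 0 < 2 * d - b := by omega
  have hhalf : ∀ w : ℂ, w + (Real.pi : ℂ) / 2 + (Real.pi : ℂ) / 2 = w + (Real.pi : ℂ) := by
    intro w; ring
  -- the key difference identity, valid for any τ of positive imaginary part
  have keydiff : ∀ (σ : ℂ), 0 < σ.im → ∀ u v : ℂ,
      Adb d b u v (4 * σ) - Cdb d b u v (4 * σ)
        = T3 (u + (Real.pi : ℂ) / 2) (((2 * d + b : ℤ) : ℂ) * σ) *
          T3 (v + (Real.pi : ℂ) / 2) (((2 * d - b : ℤ) : ℂ) * σ) := by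
    intro σ hσ u v
    have hm := master d b h1 h2 σ hσ (u + (Real.pi : ℂ) / 2) (v + (Real.pi : ℂ) / 2)
    rw [Adb_shift_u, Cdb_shift_u, hhalf, Adb_shift_pi, Cdb_shift_pi] at hm
    rw [← hm]; ring
  constructor
  · rw [keydiff τ hτ u v, theta4_eq_T3, theta4_eq_T3]
  · -- write τ = 4 * σ with σ = τ/4
    set σ : ℂ := τ / 4 with hσdef
    have hσ : 0 < σ.im := by
      rw [hσdef, Complex.div_im]
      norm_num [Complex.normSq_apply]
      positivity
    have hτσ : τ = 4 * σ := by rw [hσdef]; ring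
    rw [hτσ]
    set τ₁ : ℂ := ((2 * d + b : ℤ) : ℂ) * σ
    set τ₂ : ℂ := ((2 * d - b : ℤ) : ℂ) * σ
    have hAC := master d b h1 h2 σ hσ u v
    have hA'C' := master d b h1 h2 σ hσ u (v + (Real.pi : ℂ) / 2)
    have hd1 := keydiff σ hσ u v
    -- A' - C' :
    have hd2 : Adb d b u (v + (Real.pi : ℂ) / 2) (4 * σ)
        - Cdb d b u (v + (Real.pi : ℂ) / 2) (4 * σ)
        = T3 (u + (Real.pi : ℂ) / 2) τ₁ * T3 v τ₂ := by
      have hm := master d b h1 h2 σ hσ (u + (Real.pi : ℂ) / 2) v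
      rw [Adb_shift_u, Cdb_shift_u] at hm
      rw [← hm]; ring
    calc Adb d b u v (4 * σ) ^ 2 - Cdb d b u v (4 * σ) ^ 2
        = (Adb d b u v (4 * σ) - Cdb d b u v (4 * σ)) *
          (Adb d b u v (4 * σ) + Cdb d b u v (4 * σ)) := by ring
      _ = (T3 (u + (Real.pi : ℂ) / 2) τ₁ * T3 (v + (Real.pi : ℂ) / 2) τ₂) *
          (T3 u τ₁ * T3 v τ₂) := by rw [hd1, hAC]
      _ = (T3 (u + (Real.pi : ℂ) / 2) τ₁ * T3 v τ₂) *
          (T3 u τ₁ * T3 (v + (Real.pi : ℂ) / 2) τ₂) := by ring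
      _ = (Adb d b u (v + (Real.pi : ℂ) / 2) (4 * σ)
            - Cdb d b u (v + (Real.pi : ℂ) / 2) (4 * σ)) *
          (Adb d b u (v + (Real.pi : ℂ) / 2) (4 * σ)
            + Cdb d b u (v + (Real.pi : ℂ) / 2) (4 * σ)) := by rw [hd2, hA'C']
      _ = Adb d b u (v + (Real.pi : ℂ) / 2) (4 * σ) ^ 2
            - Cdb d b u (v + (Real.pi : ℂ) / 2) (4 * σ) ^ 2 := by ring
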